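/- If S is a Hausdorff topological semigroup such that S × S is countably compact, then every element of every maximal subgroup H(e) of S is topologically periodic; that is, for every x ∈ H(e) and every open neighbourhood U of x there exists an integer k ≥ 2 with x^k ∈ U. -/

import Mathlib

open Filter Topology

variable {S : Type*}

/-- `spow x n` is `x ^ n` for `n ≥ 1` in a semigroup (with junk value `x` at `0`). -/
def spow {S : Type*} [Mul S] (x : S) : ℕ → S
  | 0 => x
  | 1 => x
  | n + 2 => spow x (n + 1) * x

/-- An element of a topological semigroup is topologically periodic if every open
neighbourhood of `x` contains `x ^ n` for some `n ≥ 2`. -/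
def TopPeriodic {S : Type*} [Mul S] [TopologicalSpace S] (x : S) : Prop :=
  ∀ U : Set S, IsOpen U → x ∈ U → ∃ n : ℕ, 2 ≤ n ∧ spow x n ∈ U

/-- The Clifford part `H(S)` of a semigroup: the union of all maximal subgroups. -/
def HSet (S : Type*) [Mul S] : Set S :=
  {x | ∃ y, x * y = y * x ∧ x * y * x = x ∧ y * x * y = y}

/-- The maximal subgroup `H(e)` of a semigroup with identity the idempotent `e`. -/
def Hgrp (S : Type*) [Mul S] (e : S) : Set S :=
  {x | ∃ y, x * y = e ∧ y * x = e ∧ x * e = x ∧ e * x = x ∧ y * e = y ∧ e * y = y}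

/-- `inv` is the inversion map on the Clifford part `H(S)`: it sends each element of a
maximal subgroup to its (unique) commuting inverse. -/
def IsInvMap (S : Type*) [Mul S] (inv : S → S) : Prop :=
  ∀ x ∈ HSet S, x * inv x = inv x * x ∧ x * inv x * x = x ∧ inv x * x * inv x = inv x

/-- A topological space is countably compact if every countable open cover admits a
finite subcover. -/
def CountablyCompactSpace' (X : Type*) [TopologicalSpace X] : Prop :=
  ∀ U : ℕ → Set X, (∀ n, IsOpen (U n)) → (⋃ n, U n) = Set.univ →
    ∃ F : Finset ℕ, (⋃ n ∈ F, U n) = Set.univ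

/-- A subset of a topological space is countably compact (as a subspace) if every
countable cover by open sets of the ambient space admits a finite subcover. -/
def CountablyCompactIn {X : Type*} [TopologicalSpace X] (A : Set X) : Prop :=
  ∀ U : ℕ → Set X, (∀ n, IsOpen (U n)) → A ⊆ ⋃ n, U n →
    ∃ F : Finset ℕ, A ⊆ ⋃ n ∈ F, U n

/-- A topological space is pseudocompact if every continuous real-valued function on it
is bounded. -/
def Pseudocompact (X : Type*) [TopologicalSpace X] : Prop :=
  ∀ f : X → ℝ, Continuous f → ∃ M : ℝ, ∀ x, |f x| ≤ M

/-- In a countably compact space every sequence has a cluster point. -/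
lemma exists_cluster {X : Type*} [TopologicalSpace X] (hcc : CountablyCompactSpace' X)
    (f : ℕ → X) :
    ∃ p : X, ∀ U : Set X, IsOpen U → p ∈ U → ∀ N, ∃ n, N ≤ n ∧ f n ∈ U := by
  by_contra h
  push_neg at h
  obtain ⟨F, hF⟩ := hcc (fun n => (closure {y | ∃ m, n ≤ m ∧ y = f m})ᶜ)
    (fun n => isClosed_closure.isOpen_compl)
    (by
      ext p
      simp only [Set.mem_iUnion, Set.mem_univ, iff_true]
      obtain ⟨U, hU, hpU, N, hN⟩ := h p
      refine ⟨N, fun hmem => ?_⟩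
      obtain ⟨q, hqU, m, hm, rfl⟩ := mem_closure_iff.mp hmem U hU hpU
      exact hN m hm hqU)
  have hM : f (F.sup id) ∈ ⋃ n ∈ F, (closure {y | ∃ m, n ≤ m ∧ y = f m})ᶜ := by
    rw [hF]; trivial
  simp only [Set.mem_iUnion] at hM
  obtain ⟨n, hnF, hn⟩ := hM
  exact hn (subset_closure ⟨F.sup id, Finset.le_sup (f := id) hnF, rfl⟩)

lemma spow_mul_e {x e : S} [Semigroup S] (hx : x * e = x) :
    ∀ n, spow x (n + 1) * e = spow x (n + 1) := by
  intro n
  induction n with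
  | zero => simpa [spow] using hx
  | succ k ih =>
      show spow x (k + 1) * x * e = spow x (k + 1) * x
      rw [mul_assoc, hx]

lemma spow_left {y : S} [Semigroup S] :
    ∀ n, spow y (n + 2) = y * spow y (n + 1) := by
  intro n
  induction n with
  | zero => rfl
  | succ k ih =>
      show spow y (k + 2) * y = y * (spow y (k + 1) * y)
      rw [ih, mul_assoc]

lemma spow_key {x y e : S} [Semigroup S] (hxy : x * y = e) (hx : x * e = x) :
    ∀ m n, spow x (n + m + 2) * spow y (m + 1) = spow x (n + 1) := by
  intro m
  induction m with
  | zero =>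
      intro n
      show spow x (n + 1) * x * y = spow x (n + 1)
      rw [mul_assoc, hxy, spow_mul_e hx]
  | succ k ih =>
      intro n
      have h1 : spow x (n + (k + 1) + 2) * spow y (k + 2)
          = (spow x (n + k + 3) * y) * spow y (k + 1) := by
        rw [spow_left k, ← mul_assoc]
        congr 2
      have h2 : spow x (n + k + 3) * y = spow x (n + k + 2) := by
        have := spow_mul_e (x := x) (e := e) hx (n + k + 1)
        show spow x (n + k + 2) * x * y = spow x (n + k + 2)
        rw [mul_assoc, hxy, this]
      rw [h1, h2]
      exact ih n

theorem stmt2 [Semigroup S] [TopologicalSpace S] [ContinuousMul S] [T2Space S]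
    (hcc : CountablyCompactSpace' (S × S)) (e : S) (he : e * e = e) :
    ∀ x ∈ Hgrp S e, TopPeriodic x := by
  rintro x ⟨y, hxy, hyx, hxe, hex, hye, hey⟩ U hU hxU
  -- the sequence (x^{n+2}, y^{n+1}) in S × S
  set f : ℕ → S × S := fun n => (spow x (n + 2), spow y (n + 1)) with hf
  obtain ⟨⟨c, d⟩, hp⟩ := exists_cluster hcc f
  have hmul : Continuous fun p : S × S => p.1 * p.2 := continuous_mul
  have hprod : ∀ n, spow x (n + 2) * spow y (n + 1) = x := fun n => by
    simpa [show spow x 1 = x from rfl] using spow_key hxy hxe n 0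
  -- first: c * d = x
  have hcd : c * d = x := by
    by_contra hne
    obtain ⟨A, B, hA, hB, hcdA, hxB, hAB⟩ := t2_separation hne
    have hQ : IsOpen ((fun p : S × S => p.1 * p.2) ⁻¹' A) := hA.preimage hmul
    obtain ⟨n, -, hn⟩ := hp _ hQ hcdA 0
    have : x ∈ A := by
      have := hn
      simp only [Set.mem_preimage, hf] at this
      rwa [hprod n] at this
    exact (hAB.ne_of_mem this hxB) rfl
  -- U is open around c * d; get a product neighbourhood
  have hQ : IsOpen ((fun p : S × S => p.1 * p.2) ⁻¹' U) := hU.preimage hmul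
  have hcdQ : (c, d) ∈ (fun p : S × S => p.1 * p.2) ⁻¹' U := by
    simp [hcd, hxU]
  obtain ⟨V, W, hV, hW, hcV, hdW, hVW⟩ := isOpen_prod_iff.mp hQ c d hcdQ
  -- pick m with y^{m+1} ∈ W, then n ≥ m+1 with x^{n+2} ∈ V
  obtain ⟨m, -, hm⟩ := hp (V ×ˢ W) (hV.prod hW) ⟨hcV, hdW⟩ 0
  obtain ⟨n, hnm, hn⟩ := hp (V ×ˢ W) (hV.prod hW) ⟨hcV, hdW⟩ (m + 1)
  have hxV : spow x (n + 2) ∈ V := hn.1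
  have hyW : spow y (m + 1) ∈ W := hm.2
  have hmem0 : (spow x (n + 2), spow y (m + 1)) ∈ (fun p : S × S => p.1 * p.2) ⁻¹' U :=
    hVW ⟨hxV, hyW⟩
  have hmem : spow x (n + 2) * spow y (m + 1) ∈ U := hmem0
  refine ⟨n - m + 1, by omega, ?_⟩
  have hkey := spow_key hxy hxe m (n - m)
  have : n - m + m + 2 = n + 2 := by omega
  rw [this] at hkey
  rwa [hkey] at hmem
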